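/- Let Ω be a closed subset of a finite-dimensional matrix space 𝕏 and Λ_r = {X ∈ 𝕏 : rank(X) ≤ r}. Let Γ_r = Ω ∩ Λ_r. If there exist γ ≥ 0 and δ > 0 such that dist(X, Γ_r) ≤ γ·[dist(X, Ω) + dist(X, Λ_r)] for all X in the closed ball B(X̄, δ) around a point X̄ ∈ Γ_r, then the multifunction F_r(X,Y) = {X − Y} if (X,Y) ∈ Ω × Λ_r and ∅ otherwise, is metrically subregular at (X̄, X̄) for the origin: there exist κ ≥ 0 and ε > 0 such that dist((X,Y), F_r^{-1}(0)) ≤ κ·dist(0, F_r(X,Y)) for all (X,Y) ∈ B((X̄,X̄), ε) ∩ (Ω × Λ_r). -/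
import Mathlib


attribute [local instance] Matrix.frobeniusNormedAddCommGroup

/-- if the composite rank constraint set `Γ_r = Ω ∩ Λ_r` (with
`Λ_r = {X : rank X ≤ r}`) admits a local error bound
`dist(X, Γ_r) ≤ γ(dist(X, Ω) + dist(X, Λ_r))` near `X̄ ∈ Γ_r`, then the multifunction
`F_r(X,Y) = {X − Y}` on `Ω × Λ_r` is metrically subregular at `(X̄, X̄)` for `0`. -/
theorem stmt3 (n m r : ℕ) (Ω : Set (Matrix (Fin n) (Fin m) ℝ)) (hΩ : IsClosed Ω)
    (Xbar : Matrix (Fin n) (Fin m) ℝ)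
    (hXbar : Xbar ∈ Ω ∩ {X : Matrix (Fin n) (Fin m) ℝ | X.rank ≤ r})
    (hEB : ∃ γ ≥ (0:ℝ), ∃ δ > (0:ℝ), ∀ X ∈ Metric.closedBall Xbar δ,
      Metric.infDist X (Ω ∩ {X : Matrix (Fin n) (Fin m) ℝ | X.rank ≤ r}) ≤
        γ * (Metric.infDist X Ω +
          Metric.infDist X {X : Matrix (Fin n) (Fin m) ℝ | X.rank ≤ r})) :
    ∃ κ ≥ (0:ℝ), ∃ ε > (0:ℝ), ∀ X Y : Matrix (Fin n) (Fin m) ℝ,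
      X ∈ Ω → Y.rank ≤ r → dist (X, Y) (Xbar, Xbar) ≤ ε →
      Metric.infDist (X, Y)
          {p : Matrix (Fin n) (Fin m) ℝ × Matrix (Fin n) (Fin m) ℝ |
            p.1 ∈ Ω ∧ p.2.rank ≤ r ∧ p.1 = p.2} ≤ κ * dist X Y := by
  obtain ⟨γ, hγ, δ, hδ, hbd⟩ := hEB
  refine ⟨γ + 1, by linarith, δ, hδ, ?_⟩
  intro X Y hX hY hd
  set Λ := {X : Matrix (Fin n) (Fin m) ℝ | X.rank ≤ r} with hΛ
  set Γ := Ω ∩ Λ with hΓdef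
  set S := {p : Matrix (Fin n) (Fin m) ℝ × Matrix (Fin n) (Fin m) ℝ |
            p.1 ∈ Ω ∧ p.2.rank ≤ r ∧ p.1 = p.2} with hS
  have hXball : X ∈ Metric.closedBall Xbar δ := by
    rw [Metric.mem_closedBall]
    have h1 : dist X Xbar ≤ dist (X, Y) (Xbar, Xbar) := by
      rw [Prod.dist_eq]; exact le_max_left _ _
    linarith
  have h1 : Metric.infDist X Ω = 0 := Metric.infDist_zero_of_mem hX
  have h2 : Metric.infDist X Λ ≤ dist X Y := Metric.infDist_le_dist_of_mem hY
  have hΓ : Metric.infDist X Γ ≤ γ * dist X Y := by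
    have h3 := hbd X hXball
    rw [h1, zero_add] at h3
    exact h3.trans (mul_le_mul_of_nonneg_left h2 hγ)
  have hne : Γ.Nonempty := ⟨Xbar, hXbar⟩
  have key : Metric.infDist (X, Y) S ≤ Metric.infDist X Γ + dist X Y := by
    refine le_of_forall_pos_le_add fun η hη => ?_
    have : Metric.infDist X Γ < Metric.infDist X Γ + η := by linarith
    obtain ⟨Z, hZ, hdZ⟩ := (Metric.infDist_lt_iff hne).mp this
    have hZS : (Z, Z) ∈ S := ⟨hZ.1, hZ.2, rfl⟩
    have hle : Metric.infDist (X, Y) S ≤ dist (X, Y) (Z, Z) :=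
      Metric.infDist_le_dist_of_mem hZS
    have hmax : dist (X, Y) (Z, Z) ≤ dist X Z + dist X Y := by
      rw [Prod.dist_eq]
      have t1 : dist Y Z ≤ dist Y X + dist X Z := dist_triangle _ _ _
      have t2 : dist Y X = dist X Y := dist_comm _ _
      exact max_le (by linarith [dist_nonneg (x := X) (y := Y)]) (by linarith)
    linarith [hle, hmax]
  calc Metric.infDist (X, Y) S ≤ Metric.infDist X Γ + dist X Y := key
    _ ≤ γ * dist X Y + dist X Y := by linarith
    _ = (γ + 1) * dist X Y := by ring
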